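/- Let M₀, M₁, P be real polynomials with deg M₁ < deg M₀ and deg P < deg M₀, and let h > 0, v₁ > 0. Define F : ℂ → ℂ by F(s) = M₀(s) + M₁(s)·exp(−h·s). Assume F(s) ≠ 0 for every s ∈ ℂ with Re s ≥ −v₁, and that sup over s with Re s = −v₁ of |P(s)·exp(−2h·s)| / |F(s)| is strictly less than 1. Then M₀(s) + M₁(s)·exp(−h·s) + P(s)·exp(−2h·s) ≠ 0 for every s ∈ ℂ with Re s ≥ −v₁. -/

import Mathlib

open Polynomial Complex

open Filter Bornology Asymptotics Set in
private lemma abs_eval_le_aux (p : Polynomial ℂ) :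
    ∃ C : ℝ, 0 ≤ C ∧ ∀ z : ℂ, 1 ≤ ‖z‖ →
      ‖p.eval z‖ ≤ C * ‖z‖ ^ p.natDegree := by
  refine ⟨∑ i ∈ Finset.range (p.natDegree + 1), ‖p.coeff i‖,
    Finset.sum_nonneg fun i _ => (norm_nonneg _), fun z hz => ?_⟩
  rw [p.eval_eq_sum_range]
  calc ‖∑ i ∈ Finset.range (p.natDegree + 1), p.coeff i * z ^ i‖
      ≤ ∑ i ∈ Finset.range (p.natDegree + 1), ‖p.coeff i * z ^ i‖ :=
        norm_sum_le _ _
    _ ≤ ∑ i ∈ Finset.range (p.natDegree + 1),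
          ‖p.coeff i‖ * ‖z‖ ^ p.natDegree := by
        refine Finset.sum_le_sum fun i hi => ?_
        rw [norm_mul, norm_pow]
        exact mul_le_mul_of_nonneg_left
          (pow_le_pow_right₀ hz (Nat.lt_succ_iff.mp (Finset.mem_range.mp hi)))
          (norm_nonneg _)
    _ = (∑ i ∈ Finset.range (p.natDegree + 1), ‖p.coeff i‖) *
          ‖z‖ ^ p.natDegree := by rw [Finset.sum_mul]

open Filter Bornology Asymptotics Set in
private lemma ratio_tendsto_zero (p q : Polynomial ℂ) (hd : p.degree < q.degree) :
    Filter.Tendsto (fun z : ℂ => ‖p.eval z‖ / ‖q.eval z‖)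
      (Bornology.cobounded ℂ) (nhds 0) := by
  rcases eq_or_ne p 0 with rfl | hp0
  · simpa using tendsto_const_nhds
  have hq0 : q ≠ 0 := fun hq => by simp [hq] at hd
  have hqdeg : 0 < q.degree := lt_of_le_of_lt (zero_le_degree_iff.mpr hp0) hd
  have hn : 1 ≤ q.natDegree := natDegree_pos_iff_degree_pos.mpr hqdeg
  set n := q.natDegree with hndef
  set k := n - 1 with hkdef
  have hk : n = k + 1 := (Nat.succ_pred_eq_of_pos hn).symm
  have hm : p.natDegree ≤ k := by
    have : p.natDegree < n := natDegree_lt_natDegree hp0 hd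
    omega
  obtain ⟨Cp, hCp0, hCp⟩ := abs_eval_le_aux p
  obtain ⟨Cr, hCr0, hCr⟩ := abs_eval_le_aux q.eraseLead
  have hrd : q.eraseLead.natDegree ≤ k := q.eraseLead_natDegree_le
  set a := ‖q.leadingCoeff‖ with hadef
  have ha : 0 < a := by
    simpa [hadef] using (norm_pos_iff.mpr (leadingCoeff_ne_zero.mpr hq0))
  -- eventual bound
  have hbound : ∀ᶠ z : ℂ in Bornology.cobounded ℂ,
      ‖p.eval z‖ / ‖q.eval z‖ ≤ (2 * Cp / a) / ‖z‖ := by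
    filter_upwards [eventually_cobounded_le_norm (max 1 (2 * Cr / a + 1))] with z hz
    have hz1 : 1 ≤ ‖z‖ := le_trans (le_max_left _ _) hz
    have hz2 : 2 * Cr / a + 1 ≤ ‖z‖ := le_trans (le_max_right _ _) hz
    have hzpos : 0 < ‖z‖ := lt_of_lt_of_le one_pos hz1
    have hzk : (0:ℝ) < ‖z‖ ^ k := pow_pos hzpos k
    -- lower bound on |q.eval z|
    have heval : q.eval z = q.eraseLead.eval z + q.leadingCoeff * z ^ n := by
      rw [hndef]
      nth_rewrite 1 [← q.eraseLead_add_C_mul_X_pow]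
      rw [eval_add, eval_mul, eval_pow, eval_C, eval_X]
    have hlower : a / 2 * ‖z‖ ^ n ≤ ‖q.eval z‖ := by
      have h1 : a * ‖z‖ ^ n ≤ ‖q.eval z‖ +
          Cr * ‖z‖ ^ k := by
        have htri := norm_add_le (q.eval z) (-(q.eraseLead.eval z))
        rw [norm_neg] at htri
        have heq2 : q.eval z + -(q.eraseLead.eval z) = q.leadingCoeff * z ^ n := by
          rw [heval]; ring
        rw [heq2, norm_mul, norm_pow] at htri
        have h3 : ‖q.eraseLead.eval z‖ ≤ Cr * ‖z‖ ^ k := by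
          refine le_trans (hCr z hz1) ?_
          exact mul_le_mul_of_nonneg_left (pow_le_pow_right₀ hz1 hrd) hCr0
        linarith
      have h4 : Cr * ‖z‖ ^ k ≤ a / 2 * ‖z‖ ^ n := by
        rw [hk, pow_succ]
        have h5 : Cr ≤ a / 2 * ‖z‖ := by
          have h6 : a * (2 * Cr / a + 1) ≤ a * ‖z‖ :=
            mul_le_mul_of_nonneg_left hz2 ha.le
          have h7 : a * (2 * Cr / a + 1) = 2 * Cr + a := by field_simp
          linarith
        calc Cr * ‖z‖ ^ k = ‖z‖ ^ k * Cr := by ring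
          _ ≤ ‖z‖ ^ k * (a / 2 * ‖z‖) :=
              mul_le_mul_of_nonneg_left h5 (le_of_lt hzk)
          _ = a / 2 * (‖z‖ ^ k * ‖z‖) := by ring
      linarith
    have hupper : ‖p.eval z‖ ≤ Cp * ‖z‖ ^ k :=
      le_trans (hCp z hz1) (mul_le_mul_of_nonneg_left (pow_le_pow_right₀ hz1 hm) hCp0)
    have hqpos : (0:ℝ) < a / 2 * ‖z‖ ^ n := by positivity
    calc ‖p.eval z‖ / ‖q.eval z‖
        ≤ (Cp * ‖z‖ ^ k) / (a / 2 * ‖z‖ ^ n) := by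
          apply div_le_div₀ (by positivity) hupper hqpos hlower
      _ = (2 * Cp / a) / ‖z‖ := by
          rw [hk, pow_succ]
          field_simp
  refine squeeze_zero' (Filter.Eventually.of_forall fun z => by positivity) hbound ?_
  have : Filter.Tendsto (fun z : ℂ => ‖z‖) (Bornology.cobounded ℂ) Filter.atTop :=
    tendsto_norm_cobounded_atTop
  simpa [div_eq_mul_inv] using this.inv_tendsto_atTop.const_mul (2 * Cp / a)

open Filter Bornology Asymptotics Set in
/-- Rouché-type zero-exclusion for the perturbed quasi-polynomial, establishing the
closed-loop stability condition of Theorem 3(i) (inequality (A.9)). -/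
theorem quasipolynomial_zero_exclusion
    (M₀ M₁ P : Polynomial ℝ)
    (hdeg₁ : M₁.degree < M₀.degree) (hdegP : P.degree < M₀.degree)
    (h v₁ : ℝ) (hh : 0 < h) (hv₁ : 0 < v₁)
    (F : ℂ → ℂ)
    (hF : ∀ s : ℂ, F s = aeval s M₀ + aeval s M₁ * Complex.exp (-h * s))
    (hFne : ∀ s : ℂ, -v₁ ≤ s.re → F s ≠ 0)
    (hsup : sSup ((fun s : ℂ =>
        ‖aeval s P * Complex.exp (-(2 * h) * s)‖ / ‖F s‖) ''
        {s : ℂ | s.re = -v₁}) < 1) :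
    ∀ s : ℂ, -v₁ ≤ s.re →
      aeval s M₀ + aeval s M₁ * Complex.exp (-h * s)
        + aeval s P * Complex.exp (-(2 * h) * s) ≠ 0 := by
  intro s hs
  rcases eq_or_ne P 0 with rfl | hP0
  · have := hFne s hs
    rw [hF s] at this
    simpa using this
  -- setup
  have haeq : ∀ (z : ℂ) (Q : Polynomial ℝ),
      aeval z Q = (Q.map (algebraMap ℝ ℂ)).eval z := fun z Q => by
    rw [aeval_def, eval_map]
  set p := P.map (algebraMap ℝ ℂ) with hpdef
  set q₀ := M₀.map (algebraMap ℝ ℂ) with hq0def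
  set q₁ := M₁.map (algebraMap ℝ ℂ) with hq1def
  have hinj : Function.Injective (algebraMap ℝ ℂ) := (algebraMap ℝ ℂ).injective
  have hdp : p.degree = P.degree := degree_map_eq_of_injective hinj P
  have hd0 : q₀.degree = M₀.degree := degree_map_eq_of_injective hinj M₀
  have hd1 : q₁.degree = M₁.degree := degree_map_eq_of_injective hinj M₁
  have hpq : p.degree < q₀.degree := by rw [hdp, hd0]; exact hdegP
  have h1q : q₁.degree < q₀.degree := by rw [hd1, hd0]; exact hdeg₁
  have hq₀deg : 0 < q₀.degree := by
    rw [hd0]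
    exact lt_of_le_of_lt (zero_le_degree_iff.mpr hP0) hdegP
  set N : ℂ → ℂ := fun z => p.eval z * Complex.exp (-(2 * h) * z) with hNdef
  set g : ℂ → ℂ := fun z => N z / F z with hgdef
  have hF' : ∀ z, F z = q₀.eval z + q₁.eval z * Complex.exp (-h * z) := fun z => by
    rw [hF z, haeq, haeq]
  have hFdiff : Differentiable ℂ F := by
    have : F = fun z => q₀.eval z + q₁.eval z * Complex.exp (-(h:ℂ) * z) := funext hF'
    rw [this]
    exact (q₀.differentiable).add ((q₁.differentiable).mul
      (Complex.differentiable_exp.comp (differentiable_id.const_mul _)))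
  have hNdiff : Differentiable ℂ N :=
    (p.differentiable).mul (Complex.differentiable_exp.comp (differentiable_id.const_mul _))
  have hFcont : Continuous F := hFdiff.continuous
  have hNcont : Continuous N := hNdiff.continuous
  -- norms of exponentials on the half-plane
  have habs_exp : ∀ (c : ℝ) (z : ℂ), ‖Complex.exp (-(c:ℂ) * z)‖ =
      Real.exp (-c * z.re) := fun c z => by
    rw [Complex.norm_exp]
    congr 1
    simp [Complex.mul_re]
  -- the half-plane filter
  set l : Filter ℂ := Bornology.cobounded ℂ ⊓ Filter.principal {z : ℂ | -v₁ ≤ z.re} with hldef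
  -- key tendsto
  have hr1 := ratio_tendsto_zero q₁ q₀ h1q
  have hrp := ratio_tendsto_zero p q₀ hpq
  have hq₀big : Filter.Tendsto (fun z : ℂ => ‖q₀.eval z‖) (Bornology.cobounded ℂ)
      Filter.atTop := q₀.tendsto_norm_atTop hq₀deg tendsto_norm_cobounded_atTop
  set ε : ℝ := 1 / 2 * Real.exp (-(h * v₁)) with hεdef
  have hε : 0 < ε := by positivity
  have hFlow : ∀ᶠ z in l, ‖q₀.eval z‖ / 2 ≤ ‖F z‖ ∧
      0 < ‖q₀.eval z‖ ∧ -v₁ ≤ z.re := by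
    have e1 : ∀ᶠ z in l, ‖q₁.eval z‖ / ‖q₀.eval z‖ < ε :=
      (hr1.eventually (gt_mem_nhds hε)).filter_mono inf_le_left
    have e2 : ∀ᶠ z in l, (1:ℝ) ≤ ‖q₀.eval z‖ :=
      (hq₀big.eventually_ge_atTop 1).filter_mono inf_le_left
    have e3 : ∀ᶠ z in l, -v₁ ≤ z.re := by
      rw [hldef, Filter.eventually_inf_principal]
      exact Filter.Eventually.of_forall fun z hz => hz
    filter_upwards [e1, e2, e3] with z hz1 hz2 hz3
    have hq0pos : (0:ℝ) < ‖q₀.eval z‖ := lt_of_lt_of_le one_pos hz2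
    refine ⟨?_, hq0pos, hz3⟩
    have hq1le : ‖q₁.eval z‖ ≤ ε * ‖q₀.eval z‖ :=
      le_of_lt ((div_lt_iff₀ hq0pos).mp hz1)
    have hexp1 : ‖Complex.exp (-(h:ℂ) * z)‖ ≤ Real.exp (h * v₁) := by
      rw [habs_exp h z]
      exact Real.exp_le_exp.mpr (by nlinarith)
    have habsF : ‖q₀.eval z‖ - ‖q₁.eval z‖ *
        Real.exp (h * v₁) ≤ ‖F z‖ := by
      have htri := norm_add_le (F z) (-(q₁.eval z * Complex.exp (-(h:ℂ) * z)))
      rw [norm_neg] at htri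
      have heq : F z + -(q₁.eval z * Complex.exp (-(h:ℂ) * z)) = q₀.eval z := by
        rw [hF' z]; ring
      rw [heq, norm_mul] at htri
      have h2 : ‖q₁.eval z‖ * ‖Complex.exp (-(h:ℂ) * z)‖ ≤
          ‖q₁.eval z‖ * Real.exp (h * v₁) :=
        mul_le_mul_of_nonneg_left hexp1 (norm_nonneg _)
      linarith
    have : ‖q₁.eval z‖ * Real.exp (h * v₁) ≤
        ‖q₀.eval z‖ / 2 := by
      calc ‖q₁.eval z‖ * Real.exp (h * v₁)
          ≤ ε * ‖q₀.eval z‖ * Real.exp (h * v₁) :=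
            mul_le_mul_of_nonneg_right hq1le (Real.exp_nonneg _)
        _ = ‖q₀.eval z‖ / 2 := by
            have hee : Real.exp (-(h * v₁)) * Real.exp (h * v₁) = 1 := by
              rw [← Real.exp_add]; simp
            rw [hεdef]
            linear_combination (‖q₀.eval z‖ / 2) * hee
    linarith
  have hgbound : ∀ᶠ z in l, ‖g z‖ ≤ (2 * Real.exp (2 * h * v₁)) *
      (‖p.eval z‖ / ‖q₀.eval z‖) := by
    filter_upwards [hFlow] with z hz
    obtain ⟨hlow, hq0pos, hre⟩ := hz
    have hFpos : (0:ℝ) < ‖F z‖ :=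
      lt_of_lt_of_le (by positivity) hlow
    have hNle : ‖N z‖ ≤ ‖p.eval z‖ * Real.exp (2 * h * v₁) := by
      rw [hNdef]
      simp only [norm_mul]
      refine mul_le_mul_of_nonneg_left ?_ (norm_nonneg _)
      have hcast : Complex.exp (-(2 * (h:ℂ)) * z) = Complex.exp (-(((2*h:ℝ)):ℂ) * z) := by
        norm_cast
      rw [hcast, habs_exp (2*h) z]
      exact Real.exp_le_exp.mpr (by nlinarith)
    have : ‖g z‖ = ‖N z‖ / ‖F z‖ := by
      rw [hgdef]
      simp [norm_div]
    rw [this]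
    calc ‖N z‖ / ‖F z‖
        ≤ (‖p.eval z‖ * Real.exp (2 * h * v₁)) /
            (‖q₀.eval z‖ / 2) :=
          div_le_div₀ (by positivity) hNle (by positivity) hlow
      _ = (2 * Real.exp (2 * h * v₁)) *
            (‖p.eval z‖ / ‖q₀.eval z‖) := by
          have hq0ne : ‖q₀.eval z‖ ≠ 0 := ne_of_gt hq0pos
          field_simp
  have T : Filter.Tendsto g l (nhds 0) := by
    refine squeeze_zero_norm' hgbound ?_
    have := (hrp.const_mul (2 * Real.exp (2 * h * v₁))).mono_left
      (inf_le_left : l ≤ Bornology.cobounded ℂ)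
    simpa using this
  -- rewrite the sup set
  have hfun : (fun s : ℂ => ‖aeval s P * Complex.exp (-(2 * h) * s)‖ /
      ‖F s‖) = fun z => ‖N z‖ / ‖F z‖ := by
    funext z
    rw [haeq z P]
  rw [hfun] at hsup
  set C : ℝ := sSup ((fun z => ‖N z‖ / ‖F z‖) ''
    {s : ℂ | s.re = -v₁}) with hCdef
  -- the line parametrization
  set φ : ℝ → ℂ := fun t => (-v₁ : ℂ) + t * Complex.I with hφdef
  have hφre : ∀ t, (φ t).re = -v₁ := fun t => by simp [hφdef]
  have hφim : ∀ t, (φ t).im = t := fun t => by simp [hφdef]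
  have hφcont : Continuous φ := by
    rw [hφdef]
    exact continuous_const.add (Complex.continuous_ofReal.mul continuous_const)
  have hφsurj : ∀ z : ℂ, z.re = -v₁ → φ z.im = z := fun z hz => by
    rw [hφdef]
    apply Complex.ext <;> simp [hz]
  have hφtendsto : Filter.Tendsto φ (Filter.cocompact ℝ) l := by
    rw [hldef]
    refine Filter.tendsto_inf.2 ⟨?_, Filter.tendsto_principal.2
      (Filter.Eventually.of_forall fun t => le_of_eq (hφre t).symm)⟩
    rw [← tendsto_norm_atTop_iff_cobounded]
    refine Filter.tendsto_atTop_mono (fun t => ?_) tendsto_norm_cocompact_atTop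
    calc ‖t‖ = |(φ t).im| := by rw [hφim]; rfl
      _ ≤ ‖φ t‖ := Complex.abs_im_le_norm _
      _ = ‖φ t‖ := rfl
  have hφ0 : Filter.Tendsto (fun t => ‖g (φ t)‖) (Filter.cocompact ℝ) (nhds 0) :=
    (tendsto_zero_iff_norm_tendsto_zero.mp (T.comp hφtendsto))
  have hgφeq : ∀ t, ‖g (φ t)‖ = ‖N (φ t)‖ / ‖F (φ t)‖ := fun t => by
    rw [hgdef]; simp [norm_div]
  -- BddAbove of the set
  have hbdd : BddAbove ((fun z => ‖N z‖ / ‖F z‖) ''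
      {s : ℂ | s.re = -v₁}) := by
    obtain ⟨K, hKc, hKsub⟩ := Filter.mem_cocompact.mp
      (hφ0.eventually (gt_mem_nhds one_pos))
    have hrφcont : Continuous fun t => ‖N (φ t)‖ / ‖F (φ t)‖ := by
      refine Continuous.div (continuous_norm.comp (hNcont.comp hφcont))
        (continuous_norm.comp (hFcont.comp hφcont)) fun t => ?_
      simpa using hFne (φ t) (le_of_eq (hφre t).symm)
    obtain ⟨B, hB⟩ := (hKc.image hrφcont).bddAbove
    refine ⟨max 1 B, fun x hx => ?_⟩
    obtain ⟨z, hz, rfl⟩ := hx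
    have hzline : z.re = -v₁ := hz
    show ‖N z‖ / ‖F z‖ ≤ max 1 B
    have hzeq : ‖N z‖ / ‖F z‖ =
        ‖N (φ z.im)‖ / ‖F (φ z.im)‖ := by
      rw [hφsurj z hzline]
    rw [hzeq]
    by_cases hmem : z.im ∈ K
    · exact le_trans (hB (Set.mem_image_of_mem _ hmem)) (le_max_right _ _)
    · have := hKsub hmem
      simp only [Set.mem_setOf_eq] at this
      rw [hgφeq] at this
      exact le_trans (le_of_lt this) (le_max_left _ _)
  have hC : ∀ z : ℂ, z.re = -v₁ → ‖g z‖ ≤ C := fun z hz => by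
    rw [hgdef]
    simp only [norm_div]
    exact le_csSup hbdd ⟨z, hz, rfl⟩
  -- Phragmén–Lindelöf
  set G : ℂ → ℂ := fun w => g (w - v₁) with hGdef
  have hGre : ∀ w : ℂ, (w - (v₁:ℂ)).re = w.re - v₁ := fun w => by simp
  have hgdiffat : ∀ z : ℂ, -v₁ ≤ z.re → DifferentiableAt ℂ g z := fun z hz =>
    (hNdiff z).div (hFdiff z) (hFne z hz)
  have hgcontat : ∀ z : ℂ, -v₁ ≤ z.re → ContinuousAt g z := fun z hz =>
    (hgdiffat z hz).continuousAt
  have hd : DiffContOnCl ℂ G {w : ℂ | 0 < w.re} := by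
    constructor
    · intro w hw
      have : -v₁ ≤ (w - (v₁:ℂ)).re := by
        rw [hGre]
        simp only [Set.mem_setOf_eq] at hw
        linarith
      exact ((hgdiffat _ this).comp w ((differentiable_id.sub_const _) w)).differentiableWithinAt
    · have hsub : closure {w : ℂ | 0 < w.re} ⊆ {w : ℂ | 0 ≤ w.re} :=
        closure_lt_subset_le continuous_const Complex.continuous_re
      refine ContinuousOn.mono ?_ hsub
      intro w hw
      have : -v₁ ≤ (w - (v₁:ℂ)).re := by
        rw [hGre]
        simp only [Set.mem_setOf_eq] at hw
        linarith
      have hinner : ContinuousAt (fun w : ℂ => w - (v₁:ℂ)) w :=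
        (continuous_sub_right _).continuousAt
      have hcomp : ContinuousAt (fun w : ℂ => g (w - (v₁:ℂ))) w :=
        ContinuousAt.comp (x := w) (g := g) (f := fun w : ℂ => w - (v₁:ℂ))
          (hgcontat _ this) hinner
      exact hcomp.continuousWithinAt
  have hGtendsto : Filter.Tendsto G (Bornology.cobounded ℂ ⊓
      Filter.principal {w : ℂ | 0 < w.re}) (nhds 0) := by
    refine T.comp (Filter.tendsto_inf.2 ⟨?_, ?_⟩)
    · refine Filter.Tendsto.mono_left ?_ inf_le_left
      rw [← tendsto_norm_atTop_iff_cobounded]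
      refine Filter.tendsto_atTop_mono (fun w => ?_)
        (Filter.tendsto_atTop_add_const_right _ (-‖(v₁:ℂ)‖) tendsto_norm_cobounded_atTop)
      have := norm_sub_norm_le w ((v₁:ℂ))
      linarith
    · rw [Filter.tendsto_principal]
      rw [Filter.eventually_inf_principal]
      refine Filter.Eventually.of_forall fun w hw => ?_
      simp only [Set.mem_setOf_eq] at hw ⊢
      rw [hGre]
      linarith
  have hexp : ∃ c < (2:ℝ), ∃ B, G =O[Bornology.cobounded ℂ ⊓
      Filter.principal {w : ℂ | 0 < w.re}] fun w => Real.exp (B * ‖w‖ ^ c) := by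
    refine ⟨1, one_lt_two, 0, ?_⟩
    have := hGtendsto.isBigO_one (F := ℝ)
    refine this.trans (Asymptotics.isBigO_of_le _ fun w => ?_)
    simp [Real.exp_zero]
  have hre : Filter.Tendsto (fun x : ℝ => G x) Filter.atTop (nhds 0) := by
    refine T.comp (Filter.tendsto_inf.2 ⟨?_, ?_⟩)
    · rw [← tendsto_norm_atTop_iff_cobounded]
      have : ∀ x : ℝ, ‖(x:ℂ) - (v₁:ℂ)‖ = |x - v₁| := fun x => by
        rw [← Complex.ofReal_sub, Complex.norm_real, Real.norm_eq_abs]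
      simp only [this]
      exact tendsto_abs_atTop_atTop.comp (Filter.tendsto_atTop_add_const_right _ _
        Filter.tendsto_id)
    · rw [Filter.tendsto_principal]
      filter_upwards [Filter.eventually_ge_atTop (0:ℝ)] with x hx
      simp only [Set.mem_setOf_eq, hGre]
      simp only [Complex.ofReal_re]
      linarith
  have him : ∀ x : ℝ, ‖G ((x:ℂ) * Complex.I)‖ ≤ C := fun x => by
    refine hC _ ?_
    rw [hGre]
    simp
  have key : ∀ w : ℂ, 0 ≤ w.re → ‖G w‖ ≤ C := fun w hw =>
    PhragmenLindelof.right_half_plane_of_tendsto_zero_on_real hd hexp hre him hw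
  -- conclusion
  have hgs : ‖g s‖ ≤ C := by
    have := key (s + v₁) (by simp; linarith)
    simpa [hGdef] using this
  have hFpos : 0 < ‖F s‖ := norm_pos_iff.mpr (hFne s hs)
  have hNle : ‖N s‖ ≤ C * ‖F s‖ := by
    have : ‖g s‖ = ‖N s‖ / ‖F s‖ := by
      rw [hgdef]; simp [norm_div]
    rw [this] at hgs
    exact (div_le_iff₀ hFpos).mp hgs
  have hNlt : ‖N s‖ < ‖F s‖ := by
    calc ‖N s‖ ≤ C * ‖F s‖ := hNle
      _ < 1 * ‖F s‖ := by
          exact mul_lt_mul_of_pos_right hsup hFpos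
      _ = ‖F s‖ := one_mul _
  intro heq
  have hNs : aeval s P * Complex.exp (-(2 * h) * s) = N s := by
    rw [hNdef, haeq s P]
  rw [hNs, ← hF s] at heq
  have : N s = -(F s) := by linear_combination heq
  rw [this] at hNlt
  simp at hNlt
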